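/- Let β₂ be a finite set of atomic comparisons over V and let C₁, …, Cₖ be finite nonempty sets of ACs over V. Assume β₂ entails the disjunction ⋁ᵢ (⋀ Cᵢ) of the conjunctions of the Cᵢ. Then the following are equivalent: (a) there exists i such that β₂ entails every AC in Cᵢ; (b) for every choice function f selecting one f(i) ∈ Cᵢ for each i ∈ {1, …, k}, if β₂ entails the disjunction f(1) ∨ … ∨ f(k), then β₂ entails f(i) for some single i. -/
import Mathlib


namespace QC

/-- A term is a variable in `V` or a real constant. -/
inductive Term (V : Type) where
  | var : V → Term V
  | const : ℝ → Term V

/-- The comparison relations `<, ≤, =, ≠`. -/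
inductive Rel where
  | lt | le | eq | ne

/-- A comparison between two terms.  (`x ≥ c` is represented as `c ≤ x`, etc.) -/
structure Comp (V : Type) where
  rel : Rel
  lhs : Term V
  rhs : Term V

def Term.eval {V : Type} (σ : V → ℝ) : Term V → ℝ
  | .var x => σ x
  | .const c => c

def Rel.holds : Rel → ℝ → ℝ → Prop
  | .lt => fun a b => a < b
  | .le => fun a b => a ≤ b
  | .eq => fun a b => a = b
  | .ne => fun a b => a ≠ b

/-- An assignment `σ : V → ℝ` satisfies a comparison. -/
def Comp.holds {V : Type} (a : Comp V) (σ : V → ℝ) : Prop :=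
  a.rel.holds (a.lhs.eval σ) (a.rhs.eval σ)

def Term.isVar {V : Type} : Term V → Prop
  | .var _ => True
  | .const _ => False

/-- An atomic comparison: at least one side is a variable. -/
def IsAC {V : Type} (a : Comp V) : Prop := a.lhs.isVar ∨ a.rhs.isVar

/-- `σ` satisfies every comparison in the finite set `F`. -/
def Sat {V : Type} (F : Finset (Comp V)) (σ : V → ℝ) : Prop := ∀ a ∈ F, a.holds σ

/-- given that `β₂` entails `⋁ᵢ (⋀ Cᵢ)`, one disjunct suffices
(some `Cᵢ` is fully entailed) iff every containment implication obtained by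
choosing one AC from each `Cᵢ`, when true, has a single entailed disjunct. -/
theorem stmt7 {V : Type} (β₂ : Finset (Comp V))
    (hAC : ∀ a ∈ β₂, IsAC a)
    (k : ℕ) (C : Fin k → Finset (Comp V))
    (hCne : ∀ i, (C i).Nonempty)
    (hCAC : ∀ i, ∀ a ∈ C i, IsAC a)
    (hent : ∀ σ : V → ℝ, Sat β₂ σ → ∃ i, ∀ a ∈ C i, a.holds σ) :
    (∃ i, ∀ a ∈ C i, ∀ σ : V → ℝ, Sat β₂ σ → a.holds σ) ↔
    (∀ f : Fin k → Comp V, (∀ i, f i ∈ C i) →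
      (∀ σ : V → ℝ, Sat β₂ σ → ∃ i, (f i).holds σ) →
      ∃ i, ∀ σ : V → ℝ, Sat β₂ σ → (f i).holds σ) := by
  constructor
  · rintro ⟨i, hi⟩ f hf _
    exact ⟨i, fun σ hσ => hi (f i) (hf i) σ hσ⟩
  · intro h
    by_contra hno
    push_neg at hno
    choose a ha σ0 hσ0 hbad using hno
    obtain ⟨i, hi⟩ := h a ha (fun σ hσ => by
      obtain ⟨j, hj⟩ := hent σ hσ
      exact ⟨j, hj (a j) (ha j)⟩)
    exact hbad i (hi (σ0 i) (hσ0 i))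

end QC
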